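/- arXiv:0912.0819 — 2 statements merged into one kernel-verified Lean document; each statement's English description precedes it below -/
import Mathlib

section
/- Suppose G is cyclic. Then for every finite ℤ_p[G]-module M, the χ-part and the χ-quotient of M have the same cardinality: #M^χ = #M_χ. -/
/- STATEMENT 7: setup as before.  Suppose `G` is cyclic.  For every finite
`ℤ_p[G]`-module `M`, the χ-part `M^χ` and the χ-quotient
`M_χ = M ⊗_{ℤ_p[G]} ℤ_p[χ] ≅ M/I_χM` have the same cardinality. -/

open scoped Classical
noncomputable section

variable (p : ℕ) [Fact p.Prime] (G : Type) [CommGroup G]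
  (χ : G →* AlgebraicClosure ℚ_[p])

/-- `ℤ_p[χ]`, the subring generated over `ℤ_p` by the values of `χ`. -/
def Zchi : Subalgebra ℤ_[p] (AlgebraicClosure ℚ_[p]) := Algebra.adjoin ℤ_[p] (Set.range χ)

/-- `χ` with values in `ℤ_p[χ]`. -/
def chiRes : G →* (Zchi p G χ) where
  toFun g := ⟨χ g, Algebra.subset_adjoin ⟨g, rfl⟩⟩
  map_one' := by ext; simp
  map_mul' a b := by ext; simp

/-- The `ℤ_p`-algebra map `ℤ_p[G] → ℤ_p[χ]` induced by `χ`. -/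
def Phi : MonoidAlgebra ℤ_[p] G →ₐ[ℤ_[p]] (Zchi p G χ) :=
  MonoidAlgebra.lift ℤ_[p] _ G (chiRes p G χ)

/-- The ideal `I_χ`, kernel of `ℤ_p[G] → ℤ_p[χ]`. -/
def Ichi : Ideal (MonoidAlgebra ℤ_[p] G) := RingHom.ker (Phi p G χ)

/-- The χ-part `M^χ` of a `ℤ_p[G]`-module `M`: the submodule annihilated by `I_χ`. -/
def chiPart (M : Type) [AddCommGroup M] [Module (MonoidAlgebra ℤ_[p] G) M] :
    Submodule (MonoidAlgebra ℤ_[p] G) M :=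
  Submodule.torsionBySet _ M (Ichi p G χ)

lemma aux_nzsd : NoZeroSMulDivisors ℤ_[p] (Zchi p G χ) := by
  suffices hinj : Function.Injective (algebraMap ℤ_[p] (Zchi p G χ)) by
    refine ⟨fun {c x} hcx => ?_⟩
    rw [Algebra.smul_def] at hcx
    rcases mul_eq_zero.mp hcx with h | h
    · exact Or.inl (hinj (by rw [h, map_zero]))
    · exact Or.inr h
  intro a b h
  have h2 : algebraMap ℤ_[p] (AlgebraicClosure ℚ_[p]) a
      = algebraMap ℤ_[p] (AlgebraicClosure ℚ_[p]) b := by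
    have := congrArg (Subtype.val) h
    simpa [Subalgebra.algebraMap_eq] using this
  rw [IsScalarTower.algebraMap_eq ℤ_[p] ℚ_[p] (AlgebraicClosure ℚ_[p])] at h2
  have h3 := (algebraMap ℚ_[p] (AlgebraicClosure ℚ_[p])).injective (by simpa using h2)
  have : ((a : ℚ_[p]) : ℚ_[p]) = (b : ℚ_[p]) := by
    simpa [PadicInt.algebraMap_apply] using h3
  exact Subtype.ext this

lemma aux_principal [Fintype G] [IsCyclic G] :
    ∃ a : MonoidAlgebra ℤ_[p] G, Ichi p G χ = Ideal.span {a} := by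
  have := aux_nzsd p G χ
  obtain ⟨g, hg⟩ := IsCyclic.exists_generator (α := G)
  set ζ : Zchi p G χ := chiRes p G χ g with hζ
  have hζpow : ζ ^ Fintype.card G = 1 := by
    rw [hζ, ← map_pow, pow_card_eq_one, map_one]
  have hζint : IsIntegral ℤ_[p] ζ := by
    refine ⟨Polynomial.X ^ Fintype.card G - Polynomial.C 1,
      Polynomial.monic_X_pow_sub_C _ Fintype.card_pos.ne', ?_⟩
    simp [hζpow, sub_eq_zero]
  set u : MonoidAlgebra ℤ_[p] G := MonoidAlgebra.of ℤ_[p] G g with hu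
  set ψ : Polynomial ℤ_[p] →ₐ[ℤ_[p]] MonoidAlgebra ℤ_[p] G := Polynomial.aeval u with hψ
  have surjψ : Function.Surjective ψ := by
    intro f
    induction f using MonoidAlgebra.induction_on with
    | of x =>
        have hx : x ∈ Submonoid.powers g := mem_powers_iff_mem_zpowers.mpr (hg x)
        obtain ⟨k, hk⟩ := (Submonoid.mem_powers_iff _ _).mp hx
        exact ⟨Polynomial.X ^ k, by
          rw [hψ, map_pow, Polynomial.aeval_X, hu, ← map_pow, hk]⟩
    | add f₁ f₂ h₁ h₂ =>
        obtain ⟨q₁, hq₁⟩ := h₁; obtain ⟨q₂, hq₂⟩ := h₂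
        exact ⟨q₁ + q₂, by rw [map_add, hq₁, hq₂]⟩
    | smul r f h =>
        obtain ⟨q, hq⟩ := h
        exact ⟨r • q, by rw [map_smul, hq]⟩
  have hcomp : (Phi p G χ).comp ψ = Polynomial.aeval ζ := by
    apply Polynomial.algHom_ext
    rw [AlgHom.comp_apply, hψ, Polynomial.aeval_X, Polynomial.aeval_X, hu]
    simp only [Phi, hζ]
    exact MonoidAlgebra.lift_of (chiRes p G χ) g
  have hker : RingHom.ker (Polynomial.aeval ζ : Polynomial ℤ_[p] →ₐ[ℤ_[p]] Zchi p G χ)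
      = Ideal.span {minpoly ℤ_[p] ζ} := by
    ext q
    rw [RingHom.mem_ker, Ideal.mem_span_singleton]
    constructor
    · intro hq
      exact minpoly.isIntegrallyClosed_dvd hζint hq
    · rintro ⟨c, rfl⟩
      rw [map_mul, minpoly.aeval, zero_mul]
  refine ⟨ψ (minpoly ℤ_[p] ζ), ?_⟩
  have h1 : Ichi p G χ = Ideal.map ψ (RingHom.ker ((Phi p G χ).comp ψ)) := by
    have : RingHom.ker ((Phi p G χ).comp ψ)
        = Ideal.comap ψ (RingHom.ker (Phi p G χ)) := by
      rfl
    rw [this, Ideal.map_comap_of_surjective _ surjψ]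
    rfl
  rw [h1, hcomp, hker, Ideal.map_span, Set.image_singleton]

theorem statement7 (hp2 : p ≠ 2) [Fintype G] [IsCyclic G]
    (M : Type) [AddCommGroup M] [Module (MonoidAlgebra ℤ_[p] G) M] [Finite M] :
    Nat.card (chiPart p G χ M) =
      Nat.card (M ⧸ (Ichi p G χ • (⊤ : Submodule (MonoidAlgebra ℤ_[p] G) M))) := by
  obtain ⟨a, ha⟩ := aux_principal p G χ
  have h1 : chiPart p G χ M
      = LinearMap.ker (LinearMap.lsmul (MonoidAlgebra ℤ_[p] G) M a) := by
    rw [chiPart, ha]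
    ext x
    rw [Submodule.mem_torsionBySet_iff]
    constructor
    · intro h
      simpa using h ⟨a, SetLike.mem_coe.mpr (Ideal.mem_span_singleton_self a)⟩
    · rintro h ⟨r, hr⟩
      obtain ⟨c, hc⟩ := Ideal.mem_span_singleton.mp (SetLike.mem_coe.mp hr)
      have ha0 : a • x = 0 := by simpa using h
      show r • x = 0
      rw [hc, mul_comm, mul_smul, ha0, smul_zero]
  have h2 : Ichi p G χ • (⊤ : Submodule (MonoidAlgebra ℤ_[p] G) M)
      = LinearMap.range (LinearMap.lsmul (MonoidAlgebra ℤ_[p] G) M a) := by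
    rw [ha]
    apply le_antisymm
    · refine Submodule.smul_le.mpr fun r hr m _ => ?_
      obtain ⟨c, hc⟩ := Ideal.mem_span_singleton.mp hr
      exact ⟨c • m, by rw [LinearMap.lsmul_apply, hc, mul_comm, mul_smul]; exact smul_comm a c m⟩
    · rintro x ⟨m, rfl⟩
      exact Submodule.smul_mem_smul (Ideal.mem_span_singleton_self a) trivial
  set f : M →ₗ[MonoidAlgebra ℤ_[p] G] M := LinearMap.lsmul (MonoidAlgebra ℤ_[p] G) M a
  have hq : Nat.card (M ⧸ LinearMap.ker f) = Nat.card (LinearMap.range f) :=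
    Nat.card_congr f.quotKerEquivRange.toEquiv
  have c1 := Submodule.card_eq_card_quotient_mul_card (LinearMap.ker f)
  have c2 := Submodule.card_eq_card_quotient_mul_card (LinearMap.range f)
  have hpos : 0 < Nat.card (LinearMap.range f) := Nat.card_pos
  rw [h1, h2]
  have key := c1.symm.trans c2
  rw [hq] at key
  exact (Nat.eq_of_mul_eq_mul_left hpos (by linarith [key])).symm

end
end

section
/- Suppose G is cyclic. Let N be a ℤ_p[G]-module and c ∈ N an element such that the ℤ_p[G]-submodule ⟨c⟩ generated by c is free of rank 1 over ℤ_p[G] and the quotient module N/⟨c⟩ is finite. Then ⟨c⟩^χ = ⟨c⟩ ∩ N^χ, and the map N^χ/⟨c⟩^χ → (N/⟨c⟩)^χ induced by the canonical projection N → N/⟨c⟩ is an isomorphism. -/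
/- STATEMENT 8: setup as before, `G` cyclic.  Let `N` be a `ℤ_p[G]`-module and `c ∈ N`
such that the submodule `⟨c⟩` generated by `c` is free of rank 1 over `ℤ_p[G]` (i.e.
`y ↦ y • c` is injective) and `N/⟨c⟩` is finite.  Then `⟨c⟩^χ = ⟨c⟩ ∩ N^χ`, and the map
`N^χ/⟨c⟩^χ → (N/⟨c⟩)^χ` induced by the projection `N → N/⟨c⟩` is an isomorphism; the
latter is expressed by saying that the image of `N^χ` in `N/⟨c⟩` is exactly `(N/⟨c⟩)^χ`
(surjectivity; injectivity is the first equality, since the kernel of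
`N^χ → (N/⟨c⟩)^χ` is `⟨c⟩ ∩ N^χ`). -/

open scoped Classical
noncomputable section

open Polynomial

variable (p : ℕ) [Fact p.Prime] (G : Type) [CommGroup G]
  (χ : G →* AlgebraicClosure ℚ_[p])

/-! ### Auxiliary lemmas -/

lemma aux_algebraMap_inj : Function.Injective (algebraMap ℤ_[p] (Zchi p G χ)) := by
  have h1 : Function.Injective (algebraMap ℤ_[p] (AlgebraicClosure ℚ_[p])) := by
    rw [IsScalarTower.algebraMap_eq ℤ_[p] ℚ_[p] (AlgebraicClosure ℚ_[p])]
    exact (algebraMap ℚ_[p] (AlgebraicClosure ℚ_[p])).injective.comp Subtype.val_injective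
  intro a b hab
  apply h1
  have := congrArg (Subalgebra.val _) hab
  simpa using this

lemma aux_isUnit (m : ℕ) (h : ¬ (p ∣ m)) : IsUnit (m : ℤ_[p]) := by
  rw [PadicInt.isUnit_iff]
  have h1 : ‖((m : ℤ) : ℤ_[p])‖ ≤ 1 := PadicInt.norm_le_one _
  have h2 : ¬ ‖((m : ℤ) : ℤ_[p])‖ < 1 := by
    rw [PadicInt.norm_int_lt_one_iff_dvd]
    exact_mod_cast h
  push_cast at h1 h2 ⊢
  linarith

section Aux
variable [Fintype G]

lemma aux_integral (σ : G) : IsIntegral ℤ_[p] (chiRes p G χ σ) := by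
  refine ⟨X ^ Fintype.card G - C 1, monic_X_pow_sub_C 1 Fintype.card_ne_zero, ?_⟩
  have h : (chiRes p G χ σ) ^ (Fintype.card G) = 1 := by
    rw [← map_pow, pow_card_eq_one, map_one]
  simp [h]

lemma aux_m_dvd (σ : G) :
    minpoly ℤ_[p] (chiRes p G χ σ) ∣ (X ^ Fintype.card G - C 1 : ℤ_[p][X]) := by
  haveI : NoZeroSMulDivisors ℤ_[p] (Zchi p G χ) :=
    ⟨fun {_ _} h => by rw [Algebra.smul_def] at h; exact (mul_eq_zero.mp h).imp_left ((map_eq_zero_iff _ (aux_algebraMap_inj p G χ)).mp)⟩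
  refine minpoly.isIntegrallyClosed_dvd (aux_integral p G χ σ) ?_
  have h : (chiRes p G χ σ) ^ (Fintype.card G) = 1 := by
    rw [← map_pow, pow_card_eq_one, map_one]
  simp [h]

lemma aux_eps_surj (σ : G) (hσ : ∀ g : G, g ∈ Subgroup.zpowers σ) (a : MonoidAlgebra ℤ_[p] G) :
    ∃ P : ℤ_[p][X], aeval (MonoidAlgebra.of ℤ_[p] G σ) P = a := by
  induction a using MonoidAlgebra.induction_on with
  | of g =>
      obtain ⟨i, hi⟩ := (Submonoid.mem_powers_iff _ _).mp
        ((mem_powers_iff_mem_zpowers).mpr (hσ g))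
      exact ⟨X ^ i, by rw [map_pow, aeval_X, ← map_pow, hi]⟩
  | add f g hf hg =>
      obtain ⟨P, hP⟩ := hf; obtain ⟨Q, hQ⟩ := hg
      exact ⟨P + Q, by rw [map_add, hP, hQ]⟩
  | smul r f hf =>
      obtain ⟨P, hP⟩ := hf
      exact ⟨C r * P, by rw [map_mul, aeval_C, hP, Algebra.smul_def]⟩

lemma aux_Xn_sub_one (σ : G) :
    aeval (MonoidAlgebra.of ℤ_[p] G σ) (X ^ Fintype.card G - C 1 : ℤ_[p][X]) = 0 := by
  have h : (MonoidAlgebra.of ℤ_[p] G σ) ^ (Fintype.card G) = 1 := by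
    rw [← map_pow, pow_card_eq_one, map_one]
  simp [h, MonoidAlgebra.one_def]

lemma aux_eps_ker (σ : G) (hσ : ∀ g : G, g ∈ Subgroup.zpowers σ) {P : ℤ_[p][X]}
    (hP : aeval (MonoidAlgebra.of ℤ_[p] G σ) P = 0) :
    (X ^ Fintype.card G - C 1 : ℤ_[p][X]) ∣ P := by
  set n := Fintype.card G with hn
  have hn0 : n ≠ 0 := Fintype.card_ne_zero
  have hmon : (X ^ n - C (1 : ℤ_[p])).Monic := monic_X_pow_sub_C 1 hn0
  have hord : orderOf σ = n := by
    rw [orderOf_eq_card_of_forall_mem_zpowers hσ, Nat.card_eq_fintype_card]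
  suffices h : P %ₘ (X ^ n - C 1) = 0 by
    exact ⟨P /ₘ (X ^ n - C 1), by
      conv_lhs => rw [← modByMonic_add_div P (X ^ n - C 1)]
      rw [h, zero_add]⟩
  set r := P %ₘ (X ^ n - C (1 : ℤ_[p])) with hr
  by_cases hr0 : r = 0
  · exact hr0
  have hdeg : r.natDegree < n := by
    have h1 := degree_modByMonic_lt P hmon
    have h2 : (X ^ n - C (1 : ℤ_[p])).degree = (n : WithBot ℕ) :=
      degree_X_pow_sub_C (Nat.pos_of_ne_zero hn0) 1
    rw [h2] at h1
    exact natDegree_lt_iff_degree_lt hr0 |>.mpr h1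
  have haev : aeval (MonoidAlgebra.of ℤ_[p] G σ) r = 0 := by
    have h3 : P = (X ^ n - C 1) * (P /ₘ (X ^ n - C 1)) + r := by
      conv_lhs => rw [← modByMonic_add_div P (X ^ n - C 1)]
      ring
    have := congrArg (aeval (MonoidAlgebra.of ℤ_[p] G σ)) h3
    rw [hP, map_add, map_mul, aux_Xn_sub_one, zero_mul, zero_add] at this
    exact this.symm
  exfalso
  apply hr0
  have hsum : r = ∑ i ∈ Finset.range n, monomial i (r.coeff i) := as_sum_range' r n hdeg
  have hsum2 : (0 : MonoidAlgebra ℤ_[p] G)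
      = ∑ i ∈ Finset.range n, MonoidAlgebra.single (σ ^ i) (r.coeff i) := by
    rw [← haev]
    conv_lhs => rw [hsum]
    rw [map_sum]
    refine Finset.sum_congr rfl fun i _ => ?_
    rw [aeval_monomial, ← map_pow (MonoidAlgebra.of ℤ_[p] G),
      ← MonoidAlgebra.single_eq_algebraMap_mul_of]
  have hcoeff : ∀ j < n, r.coeff j = 0 := by
    intro j hj
    have := congrFun (congrArg (fun f : MonoidAlgebra ℤ_[p] G => (f.coeff : G → ℤ_[p])) hsum2) (σ ^ j)
    simp only [MonoidAlgebra.coeff_zero, MonoidAlgebra.coeff_sum, Finsupp.coe_zero, Pi.zero_apply] at this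
    rw [Finset.sum_apply'] at this
    have heval : ∀ i ∈ Finset.range n,
        (MonoidAlgebra.single (σ ^ i) (r.coeff i)).coeff (σ ^ j)
          = if i = j then r.coeff i else 0 := by
      intro i hi
      rw [MonoidAlgebra.coeff_single, Finsupp.single_apply]
      by_cases h : i = j
      · rw [if_pos (by rw [h]), if_pos h]
      · rw [if_neg ?_, if_neg h]
        intro hh
        exact h (pow_injOn_Iio_orderOf
          (by rw [hord, Set.mem_Iio, ← Finset.mem_range]; exact hi)
          (by rw [hord, Set.mem_Iio]; exact hj) hh)
    rw [Finset.sum_congr rfl heval, Finset.sum_ite_eq' _ j, if_pos (Finset.mem_range.mpr hj)]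
      at this
    exact this.symm
  ext j
  rcases lt_or_ge j n with hj | hj
  · simpa using hcoeff j hj
  · simp [coeff_eq_zero_of_natDegree_lt (lt_of_lt_of_le hdeg hj)]

lemma aux_Phi_aeval (σ : G) (P : ℤ_[p][X]) :
    Phi p G χ (aeval (MonoidAlgebra.of ℤ_[p] G σ) P) = aeval (chiRes p G χ σ) P := by
  have h := aeval_algHom_apply (Phi p G χ) (MonoidAlgebra.of ℤ_[p] G σ) P
  rw [show Phi p G χ (MonoidAlgebra.of ℤ_[p] G σ) = chiRes p G χ σ from
    MonoidAlgebra.lift_of _ _] at h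
  exact h.symm

lemma aux_mem_Ichi (σ : G) (hσ : ∀ g : G, g ∈ Subgroup.zpowers σ)
    (a : MonoidAlgebra ℤ_[p] G) :
    a ∈ Ichi p G χ ↔ ∃ P : ℤ_[p][X],
      (minpoly ℤ_[p] (chiRes p G χ σ)) ∣ P ∧ aeval (MonoidAlgebra.of ℤ_[p] G σ) P = a := by
  haveI : NoZeroSMulDivisors ℤ_[p] (Zchi p G χ) :=
    ⟨fun {_ _} h => by rw [Algebra.smul_def] at h; exact (mul_eq_zero.mp h).imp_left ((map_eq_zero_iff _ (aux_algebraMap_inj p G χ)).mp)⟩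
  constructor
  · intro ha
    obtain ⟨P, hP⟩ := aux_eps_surj p G σ hσ a
    refine ⟨P, ?_, hP⟩
    have h0 : aeval (chiRes p G χ σ) P = 0 := by
      rw [← aux_Phi_aeval, hP]
      exact ha
    exact minpoly.isIntegrallyClosed_dvd (aux_integral p G χ σ) h0
  · rintro ⟨P, ⟨Q, rfl⟩, rfl⟩
    show Phi p G χ _ = 0
    rw [aux_Phi_aeval, map_mul, minpoly.aeval, zero_mul]

lemma aux_key (σ : G) (hσ : ∀ g : G, g ∈ Subgroup.zpowers σ) (k : ℕ)
    (z f : MonoidAlgebra ℤ_[p] G)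
    (h : aeval (MonoidAlgebra.of ℤ_[p] G σ) (minpoly ℤ_[p] (chiRes p G χ σ)) * z
      = (p : MonoidAlgebra ℤ_[p] G) ^ k * f) :
    aeval (MonoidAlgebra.of ℤ_[p] G σ) (minpoly ℤ_[p] (chiRes p G χ σ)) ∣ f := by
  haveI : NoZeroSMulDivisors ℤ_[p] (Zchi p G χ) :=
    ⟨fun {_ _} h => by rw [Algebra.smul_def] at h; exact (mul_eq_zero.mp h).imp_left ((map_eq_zero_iff _ (aux_algebraMap_inj p G χ)).mp)⟩
  set m := minpoly ℤ_[p] (chiRes p G χ σ) with hm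
  obtain ⟨q, hq⟩ := aux_m_dvd p G χ σ
  obtain ⟨Z, hZ⟩ := aux_eps_surj p G σ hσ z
  obtain ⟨F, hF⟩ := aux_eps_surj p G σ hσ f
  have hpC : aeval (MonoidAlgebra.of ℤ_[p] G σ) (C ((p : ℤ_[p])) ^ k : ℤ_[p][X])
      = (p : MonoidAlgebra ℤ_[p] G) ^ k := by
    rw [map_pow, aeval_C, map_natCast]
  have h0 : aeval (MonoidAlgebra.of ℤ_[p] G σ) (m * Z - C ((p : ℤ_[p])) ^ k * F) = 0 := by
    rw [map_sub, map_mul, map_mul, hZ, hF, hpC, h, sub_self]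
  obtain ⟨S, hS⟩ := aux_eps_ker p G σ hσ h0
  rw [hq] at hS
  have h1 : C ((p : ℤ_[p])) ^ k * F = m * (Z - q * S) := by ring_nf; linear_combination -hS
  have hp : Prime (C ((p : ℤ_[p])) : ℤ_[p][X]) := prime_C_iff.mpr PadicInt.prime_p
  have hnd : ¬ ((C ((p : ℤ_[p])) : ℤ_[p][X]) ∣ m) := by
    intro hd
    have h2 := (C_dvd_iff_dvd_coeff _ _).mp hd m.natDegree
    rw [(minpoly.monic (aux_integral p G χ σ)).coeff_natDegree] at h2
    exact (PadicInt.prime_p).not_unit (isUnit_of_dvd_one h2)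
  have h3 : (C ((p : ℤ_[p])) : ℤ_[p][X]) ^ k ∣ m * (Z - q * S) :=
    ⟨F, by rw [← h1]⟩
  obtain ⟨V, hV⟩ := hp.pow_dvd_of_dvd_mul_left k hnd h3
  have h4 : (C ((p : ℤ_[p])) : ℤ_[p][X]) ^ k * F
      = (C ((p : ℤ_[p])) : ℤ_[p][X]) ^ k * (m * V) := by
    rw [h1, hV]; ring
  have hC0 : ((C ((p : ℤ_[p])) : ℤ_[p][X])) ^ k ≠ 0 := by
    apply pow_ne_zero
    rw [Ne, C_eq_zero]
    exact_mod_cast (Fact.out : p.Prime).ne_zero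
  have h5 : F = m * V := mul_left_cancel₀ hC0 h4
  exact ⟨aeval (MonoidAlgebra.of ℤ_[p] G σ) V, by rw [← hF, h5, map_mul]⟩

end Aux

theorem statement8 (hp2 : p ≠ 2) [Fintype G] [IsCyclic G]
    (N : Type) [AddCommGroup N] [Module (MonoidAlgebra ℤ_[p] G) N] (c : N)
    (hfree : Function.Injective fun y : MonoidAlgebra ℤ_[p] G => y • c)
    (hfin : Finite (N ⧸ Submodule.span (MonoidAlgebra ℤ_[p] G) {c})) :
    (Submodule.map (Submodule.span (MonoidAlgebra ℤ_[p] G) {c}).subtype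
        (chiPart p G χ (Submodule.span (MonoidAlgebra ℤ_[p] G) {c}))
      = Submodule.span (MonoidAlgebra ℤ_[p] G) {c} ⊓ chiPart p G χ N) ∧
    Submodule.map (Submodule.span (MonoidAlgebra ℤ_[p] G) {c}).mkQ (chiPart p G χ N)
      = chiPart p G χ (N ⧸ Submodule.span (MonoidAlgebra ℤ_[p] G) {c}) := by
  set R := MonoidAlgebra ℤ_[p] G with hR
  set CC := Submodule.span R {c} with hCC
  constructor
  · ext x
    simp only [Submodule.mem_map, Submodule.mem_inf]
    constructor
    · rintro ⟨⟨y, hy⟩, hmem, rfl⟩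
      refine ⟨hy, ?_⟩
      rw [chiPart, Submodule.mem_torsionBySet_iff] at hmem ⊢
      intro a
      have h := hmem a
      have := congrArg (CC.subtype) h
      simpa using this
    · rintro ⟨hyC, htor⟩
      rw [chiPart, Submodule.mem_torsionBySet_iff] at htor
      refine ⟨⟨x, hyC⟩, ?_, rfl⟩
      rw [chiPart, Submodule.mem_torsionBySet_iff]
      intro a
      ext
      simpa using htor a
  · apply le_antisymm
    · rintro _ ⟨x, hx, rfl⟩
      have hx' := (Submodule.mem_torsionBySet_iff _ _).mp hx
      refine (Submodule.mem_torsionBySet_iff _ _).mpr fun a => ?_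
      rw [← map_smul, hx' a, map_zero]
    · intro xb hxb
      obtain ⟨σ, hσ⟩ := IsCyclic.exists_generator (α := G)
      obtain ⟨x, rfl⟩ := CC.mkQ_surjective xb
      rw [chiPart, Submodule.mem_torsionBySet_iff] at hxb
      have hxI : ∀ a ∈ Ichi p G χ, a • x ∈ CC := by
        intro a ha
        have h := hxb ⟨a, ha⟩
        rw [← map_smul, Submodule.mkQ_apply, Submodule.Quotient.mk_eq_zero] at h
        exact h
      -- kill the quotient by a power of p
      set t := addOrderOf (CC.mkQ x) with htdef
      have ht : t ≠ 0 := (addOrderOf_pos _).ne'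
      set k := t.factorization p with hkdef
      set mm := t / p ^ k with hmmdef
      have hmmt : p ^ k * mm = t := Nat.ordProj_mul_ordCompl_eq_self t p
      have hpmm : ¬ p ∣ mm := Nat.not_dvd_ordCompl (Fact.out : p.Prime) ht
      obtain ⟨u, hu⟩ := aux_isUnit p mm hpmm
      have htx : ((t : R)) • CC.mkQ x = 0 := by
        rw [Nat.cast_smul_eq_nsmul]
        exact addOrderOf_nsmul_eq_zero _
      have hpkx : ((p : R)) ^ k • CC.mkQ x = 0 := by
        have hcomp : (algebraMap ℤ_[p] R (↑u⁻¹)) * (t : R) = (p : R) ^ k := by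
          have h1 : (t : R) = (p : R) ^ k * algebraMap ℤ_[p] R (↑u) := by
            rw [hu, map_natCast, ← hmmt]
            push_cast
            ring
          rw [h1, mul_comm ((p : R) ^ k), ← mul_assoc, ← map_mul, Units.inv_mul,
            map_one, one_mul]
        rw [← hcomp, mul_smul, htx, smul_zero]
      have hpkxC : ((p : R)) ^ k • x ∈ CC := by
        rw [← Submodule.Quotient.mk_eq_zero, ← Submodule.mkQ_apply, map_smul]
        exact hpkx
      obtain ⟨z, hz⟩ := Submodule.mem_span_singleton.mp hpkxC
      set g := aeval (MonoidAlgebra.of ℤ_[p] G σ) (minpoly ℤ_[p] (chiRes p G χ σ)) with hg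
      have hgI : g ∈ Ichi p G χ :=
        (aux_mem_Ichi p G χ σ hσ g).mpr ⟨minpoly ℤ_[p] (chiRes p G χ σ), dvd_refl _, rfl⟩
      obtain ⟨f, hf⟩ := Submodule.mem_span_singleton.mp (hxI g hgI)
      have hzf : g * z = (p : R) ^ k * f := by
        apply hfree
        show (g * z) • c = ((p : R) ^ k * f) • c
        rw [mul_smul, hz, mul_smul, hf, smul_smul, smul_smul, mul_comm]
      obtain ⟨v, hv⟩ := aux_key p G χ σ hσ k z f hzf
      refine ⟨x - v • c, ?_, ?_⟩
      · refine (Submodule.mem_torsionBySet_iff _ _).mpr ?_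
        rintro ⟨a, ha⟩
        obtain ⟨P, ⟨P', hP'⟩, hPa⟩ := (aux_mem_Ichi p G χ σ hσ a).mp ha
        set a' := aeval (MonoidAlgebra.of ℤ_[p] G σ) P' with ha'def
        have ha' : a = g * a' := by rw [← hPa, hP', map_mul]
        show a • (x - v • c) = 0
        rw [smul_sub, ha']
        have h1 : (g * a') • x = (g * a') • (v • c) := by
          calc (g * a') • x = a' • (g • x) := by rw [mul_comm, mul_smul]
            _ = a' • (f • c) := by rw [hf]
            _ = (a' * f) • c := by rw [smul_smul]
            _ = ((g * a') * v) • c := by rw [hv, ← hg]; ring_nf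
            _ = (g * a') • (v • c) := by rw [mul_smul]
        rw [h1, sub_self]
      · have h2 : CC.mkQ (v • c) = 0 := by
          rw [Submodule.mkQ_apply, Submodule.Quotient.mk_eq_zero]
          exact Submodule.smul_mem _ v (Submodule.mem_span_singleton_self c)
        rw [map_sub, h2, sub_zero]

end
end
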